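/- Let $f : \mathbb{R}^d \to \mathbb{R}$ be differentiable, and let $A, B \subseteq [d]$ be disjoint. Suppose $b^{(A)}$ maximizes $f$ over $\{x : \mathrm{supp}(x) \subseteq A\}$ and $b^{(A\cup B)}$ maximizes $f$ over $\{x : \mathrm{supp}(x) \subseteq A \cup B\}$. Suppose $f$ satisfies the restricted smoothness inequality $f(y) - f(x) - \langle \nabla f(x), y - x\rangle \ge -\frac{\nu}{2}\|y - x\|_2^2$ for all $x$ with $\mathrm{supp}(x) \subseteq A$ and $y$ with $\mathrm{supp}(y) \subseteq A\cup B$ and $\mathrm{supp}(y - x)\subseteq B$, where $\nu > 0$. Then $f(b^{(A\cup B)}) - f(b^{(A)}) \ge \frac{1}{2\nu} \|\nabla f(b^{(A)})_B\|_2^2$, where $\nabla f(b^{(A)})_B$ denotes the restriction of the gradient to coordinates in $B$. -/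

import Mathlib

theorem rsm_gradient_lower_bound (d : ℕ) (f : EuclideanSpace ℝ (Fin d) → ℝ)
    (g : EuclideanSpace ℝ (Fin d) → EuclideanSpace ℝ (Fin d))
    (hgrad : ∀ x, HasGradientAt f (g x) x)
    (A B : Finset (Fin d)) (hAB : Disjoint A B) (ν : ℝ) (hν : 0 < ν)
    (bA bAB : EuclideanSpace ℝ (Fin d))
    (hbA_supp : ∀ i, i ∉ A → bA i = 0)
    (hbA_max : ∀ x : EuclideanSpace ℝ (Fin d), (∀ i, i ∉ A → x i = 0) → f x ≤ f bA)
    (hbAB_supp : ∀ i, i ∉ A ∪ B → bAB i = 0)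
    (hbAB_max : ∀ x : EuclideanSpace ℝ (Fin d),
      (∀ i, i ∉ A ∪ B → x i = 0) → f x ≤ f bAB)
    (hsmooth : ∀ x y : EuclideanSpace ℝ (Fin d),
      (∀ i, i ∉ A → x i = 0) → (∀ i, i ∉ A ∪ B → y i = 0) →
      (∀ i, i ∉ B → y i - x i = 0) →
      f y - f x - (inner ℝ (g x) (y - x) : ℝ) ≥ -(ν / 2) * ‖y - x‖ ^ 2) :
    (1 / (2 * ν)) * ∑ i ∈ B, (g bA i) ^ 2 ≤ f bAB - f bA := by
  set S : ℝ := ∑ i ∈ B, (g bA i) ^ 2 with hS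
  have hS0 : 0 ≤ S := Finset.sum_nonneg fun i _ => sq_nonneg _
  set y : EuclideanSpace ℝ (Fin d) := WithLp.toLp 2 (fun i => bA i + (if i ∈ B then g bA i / ν else 0)) with hy
  have hysupp : ∀ i, i ∉ A ∪ B → y i = 0 := by
    intro i hi
    simp only [Finset.mem_union, not_or] at hi
    simp [hy, hbA_supp i hi.1, hi.2]
  have hdiff : ∀ i, (y - bA) i = if i ∈ B then g bA i / ν else 0 := by
    intro i; simp [hy]
  have hinner : (inner ℝ (g bA) (y - bA) : ℝ) = S / ν := by
    rw [PiLp.inner_apply]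
    simp only [hdiff, RCLike.inner_apply, conj_trivial]
    simp only [ite_mul, zero_mul, mul_ite, mul_zero, Finset.sum_ite_mem, Finset.univ_inter]
    rw [hS, Finset.sum_div]
    exact Finset.sum_congr rfl fun i _ => by ring
  have hnorm : ‖y - bA‖ ^ 2 = S / ν ^ 2 := by
    rw [← real_inner_self_eq_norm_sq, PiLp.inner_apply]
    simp only [hdiff, RCLike.inner_apply, conj_trivial]
    simp only [ite_mul, zero_mul, mul_ite, mul_zero, Finset.sum_ite_mem, Finset.univ_inter, Finset.inter_self]
    rw [hS, Finset.sum_div]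
    refine Finset.sum_congr rfl fun i _ => ?_
    field_simp
  have hsm := hsmooth bA y hbA_supp hysupp (by
    intro i hi; simpa [PiLp.sub_apply, hi] using hdiff i)
  rw [hinner, hnorm] at hsm
  have hfy : f y ≤ f bAB := hbAB_max y hysupp
  have : f y - f bA ≥ S / (2 * ν) := by
    have : f y - f bA ≥ S / ν - (ν / 2) * (S / ν ^ 2) := by linarith
    calc f y - f bA ≥ S / ν - (ν / 2) * (S / ν ^ 2) := this
      _ = S / (2 * ν) := by field_simp; ring
  have : (1 / (2 * ν)) * S = S / (2 * ν) := by ring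
  linarith
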